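/- Let C be a linear subspace of GF(2)^n with 0 < m = dim C < n, with minimum Hamming distance at least d ≥ 1 and dual distance at least d^⊥ ≥ 1. Then 2n ≥ d + d^⊥ + Σ_{i=1}^{m−1} ⌈d/2^i⌉ + Σ_{i=1}^{n−m−1} ⌈d^⊥/2^i⌉. -/

import Mathlib

/-- The dual code of a binary linear code `C ⊆ GF(2)^n`. -/
def dualCode {n : ℕ} (C : Submodule (ZMod 2) (Fin n → ZMod 2)) :
    Submodule (ZMod 2) (Fin n → ZMod 2) where
  carrier := {u | ∀ v ∈ C, dotProduct u v = 0}
  zero_mem' := by intro v _; simp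
  add_mem' := by
    intro a b ha hb v hv
    rw [Set.mem_setOf_eq] at *
    rw [add_dotProduct, ha v hv, hb v hv, add_zero]
  smul_mem' := by
    intro c u hu v hv
    rw [Set.mem_setOf_eq] at *
    rw [smul_dotProduct, hu v hv, smul_zero]

/-- The minimum Hamming distance of the code `C` is at least `d`. -/
def MinDistGE {n : ℕ} (C : Submodule (ZMod 2) (Fin n → ZMod 2)) (d : ℕ) : Prop :=
  ∀ c ∈ C, c ≠ 0 → d ≤ hammingNorm c



lemma myCeilDiv_mono {a b c : ℕ} (h : a ≤ b) (hc : 0 < c) : a ⌈/⌉ c ≤ b ⌈/⌉ c :=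
  (gc_mul_ceilDiv hc).monotone_l h

lemma myCeilDiv_ceilDiv (a b c : ℕ) (hb : 0 < b) (hc : 0 < c) :
    a ⌈/⌉ b ⌈/⌉ c = a ⌈/⌉ (b * c) := by
  apply le_antisymm
  · rw [ceilDiv_le_iff_le_mul hc, ceilDiv_le_iff_le_mul hb, ← mul_assoc]
    simpa using le_smul_ceilDiv (mul_pos hb hc) (b := a)
  · rw [ceilDiv_le_iff_le_mul (mul_pos hb hc), mul_assoc]
    calc a ≤ b * (a ⌈/⌉ b) := by simpa using le_smul_ceilDiv hb (b := a)
    _ ≤ b * (c * (a ⌈/⌉ b ⌈/⌉ c)) := by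
        have := le_smul_ceilDiv hc (b := a ⌈/⌉ b)
        simp only [smul_eq_mul] at this
        exact Nat.mul_le_mul_left _ this

lemma norm_add_norm {ι : Type} [Fintype ι] [DecidableEq ι] (c y : ι → ZMod 2) :
    hammingNorm y + hammingNorm (y + c) =
      hammingNorm c + 2 * (Finset.univ.filter fun i => c i = 0 ∧ y i ≠ 0).card := by
  have key : ∀ a b : ZMod 2,
      ((if a ≠ 0 then 1 else 0) + (if a + b ≠ 0 then 1 else 0) : ℕ) =
        (if b ≠ 0 then 1 else 0) + 2 * (if b = 0 ∧ a ≠ 0 then 1 else 0) := by decide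
  simp only [hammingNorm, Finset.card_filter, ← Finset.sum_add_distrib, Finset.mul_sum]
  refine Finset.sum_congr rfl fun i _ => ?_
  simpa using key (y i) (c i)

lemma card_eq_norm_res {ι : Type} [Fintype ι] [DecidableEq ι] (c y : ι → ZMod 2) :
    (Finset.univ.filter fun i => c i = 0 ∧ y i ≠ 0).card =
      hammingNorm (fun i : {i // c i = 0} => y i.val) := by
  rw [hammingNorm, ← Fintype.card_subtype, ← Fintype.card_subtype]
  exact Fintype.card_congr (Equiv.subtypeSubtypeEquivSubtypeInter _ _).symm

lemma card_T {ι : Type} [Fintype ι] [DecidableEq ι] (c : ι → ZMod 2) :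
    Fintype.card {i // c i = 0} + hammingNorm c = Fintype.card ι := by
  rw [hammingNorm, Fintype.card_subtype, Fintype.card,
    ← Finset.card_filter_add_card_filter_not (p := fun i => c i = 0) (s := Finset.univ)]

lemma zmod2_add_eq_zero {a b : ZMod 2} (h : a + b = 0) : a = b := by revert h; revert a b; decide

lemma fun_add_eq_zero {ι : Type} {y c : ι → ZMod 2} (h : y + c = 0) : y = c :=
  funext fun i => zmod2_add_eq_zero (congrFun h i)

lemma griesmer : ∀ (k : ℕ) (ι : Type) [Fintype ι] [DecidableEq ι]
    (C : Submodule (ZMod 2) (ι → ZMod 2)) (d : ℕ), 1 ≤ d →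
    Module.finrank (ZMod 2) C = k →
    (∀ c ∈ C, c ≠ 0 → d ≤ hammingNorm c) →
    ∑ i ∈ Finset.range k, d ⌈/⌉ 2 ^ i ≤ Fintype.card ι := by
  intro k
  induction k with
  | zero => intro ι _ _ C d _ _ _; simp
  | succ k ih =>
    intro ι _ _ C d hd hrank hmin
    -- C is nontrivial
    have hCne : ∃ x, x ∈ C ∧ x ≠ 0 := by
      by_contra h
      push_neg at h
      have : C = ⊥ := by
        rw [Submodule.eq_bot_iff]
        exact fun x hx => h x hx
      rw [this, finrank_bot] at hrank
      omega
    -- minimum weight codeword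
    set Wset : Set ℕ := {t | ∃ x, x ∈ C ∧ x ≠ 0 ∧ hammingNorm x = t} with hWset
    have hWne : Wset.Nonempty := by
      obtain ⟨x, hx, hx0⟩ := hCne
      exact ⟨hammingNorm x, x, hx, hx0, rfl⟩
    obtain ⟨c, hcC, hc0, hcw⟩ := Nat.sInf_mem hWne
    set w := sInf Wset with hw
    have hmin' : ∀ x ∈ C, x ≠ 0 → w ≤ hammingNorm x := fun x hx hx0 =>
      Nat.sInf_le ⟨x, hx, hx0, rfl⟩
    have hdw : d ≤ w := hcw ▸ hmin c hcC hc0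
    have hw1 : 1 ≤ w := le_trans hd hdw
    -- the projection
    set T := {i // c i = 0} with hT
    let π : (ι → ZMod 2) →ₗ[ZMod 2] (T → ZMod 2) :=
      LinearMap.funLeft (ZMod 2) (ZMod 2) Subtype.val
    have hπc : π c = 0 := funext fun i => i.2
    -- master identity
    have master : ∀ y : ι → ZMod 2,
        hammingNorm y + hammingNorm (y + c) = w + 2 * hammingNorm (π y) := by
      intro y
      rw [← hcw, norm_add_norm c y, card_eq_norm_res c y]
      rfl
    -- kernel characterization
    have hker : ∀ y ∈ C, π y = 0 → y = 0 ∨ y = c := by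
      intro y hy hy0
      by_contra h
      push_neg at h
      obtain ⟨h1, h2⟩ := h
      have hyc0 : y + c ≠ 0 := fun hc' => h2 (fun_add_eq_zero hc')
      have := master y
      rw [hy0, hammingNorm_zero] at this
      have e1 := hmin' y hy h1
      have e2 := hmin' (y + c) (C.add_mem hy hcC) hyc0
      omega
    -- residual min distance
    have hres : ∀ y ∈ C, π y ≠ 0 → w ⌈/⌉ 2 ≤ hammingNorm (π y) := by
      intro y hy hπy
      have hy0 : y ≠ 0 := fun h => hπy (by rw [h, map_zero])
      have hyc : y + c ≠ 0 := by
        intro h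
        have : y = c := fun_add_eq_zero h
        exact hπy (this ▸ hπc)
      have := master y
      have e1 := hmin' y hy hy0
      have e2 := hmin' (y + c) (C.add_mem hy hcC) hyc
      rw [ceilDiv_le_iff_le_mul (by norm_num : (0:ℕ) < 2)]
      omega
    -- rank of the residual code
    let f : C →ₗ[ZMod 2] (T → ZMod 2) := π.comp C.subtype
    have hrange : LinearMap.range f = C.map π := by
      rw [LinearMap.range_comp, Submodule.range_subtype]
    have hkerf : LinearMap.ker f = Submodule.span (ZMod 2) {(⟨c, hcC⟩ : C)} := by
      apply le_antisymm
      · intro z hz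
        rw [LinearMap.mem_ker] at hz
        rcases hker z.val z.2 hz with h | h
        · have : z = 0 := Subtype.ext h
          rw [this]; exact Submodule.zero_mem _
        · have : z = ⟨c, hcC⟩ := Subtype.ext h
          rw [this]; exact Submodule.mem_span_singleton_self _
      · rw [Submodule.span_le, Set.singleton_subset_iff]
        exact hπc
    have hcne : (⟨c, hcC⟩ : C) ≠ 0 := fun h => hc0 (congrArg Subtype.val h)
    have hrank' : Module.finrank (ZMod 2) (C.map π) = k := by
      have h1 := LinearMap.finrank_range_add_finrank_ker f
      rw [hrange, hkerf, finrank_span_singleton hcne, hrank] at h1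
      omega
    -- apply IH
    have hwd2 : 1 ≤ w ⌈/⌉ 2 := by
      by_contra h
      push_neg at h
      have : w ⌈/⌉ 2 ≤ 0 := by omega
      rw [ceilDiv_le_iff_le_mul (by norm_num : (0:ℕ) < 2)] at this
      omega
    have hIH := ih T (C.map π) (w ⌈/⌉ 2) hwd2 hrank' ?_
    · -- assemble
      have hcardT : Fintype.card T + hammingNorm c = Fintype.card ι := card_T c
      rw [hcw] at hcardT
      rw [Finset.sum_range_succ', pow_zero, ceilDiv_one]
      have hstep : ∀ i ∈ Finset.range k, d ⌈/⌉ 2 ^ (i + 1) ≤ (w ⌈/⌉ 2) ⌈/⌉ 2 ^ i := by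
        intro i _
        rw [myCeilDiv_ceilDiv w 2 (2 ^ i) (by norm_num) (Nat.pow_pos (by norm_num))]
        calc d ⌈/⌉ 2 ^ (i + 1) ≤ w ⌈/⌉ 2 ^ (i + 1) :=
              myCeilDiv_mono hdw (Nat.pow_pos (by norm_num))
        _ = w ⌈/⌉ (2 * 2 ^ i) := by rw [pow_succ, mul_comm]
      have := Finset.sum_le_sum hstep
      omega
    · intro y' hy' hy'0
      obtain ⟨y, hy, rfl⟩ := Submodule.mem_map.mp hy'
      exact hres y hy hy'0

noncomputable def toDualLin (n : ℕ) :
    (Fin n → ZMod 2) →ₗ[ZMod 2] Module.Dual (ZMod 2) (Fin n → ZMod 2) where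
  toFun u :=
    { toFun := fun v => dotProduct u v
      map_add' := fun a b => dotProduct_add u a b
      map_smul' := fun r a => by simp [dotProduct_smul] }
  map_add' := fun a b => by ext v; simp [add_dotProduct]
  map_smul' := fun r a => by ext v; simp [smul_dotProduct]

lemma toDualLin_bij (n : ℕ) : Function.Bijective (toDualLin n) := by
  have hinj : Function.Injective (toDualLin n) := by
    rw [← LinearMap.ker_eq_bot, Submodule.eq_bot_iff]
    intro u hu
    rw [LinearMap.mem_ker] at hu
    funext i
    have := congrArg (fun φ => φ (Pi.single i 1)) hu
    simpa [toDualLin, dotProduct_single] using this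
  refine ⟨hinj, ?_⟩
  rw [← LinearMap.injective_iff_surjective_of_finrank_eq_finrank ?_]
  · exact hinj
  · exact (Subspace.dual_finrank_eq).symm

lemma finrank_dualCode {n : ℕ} (C : Submodule (ZMod 2) (Fin n → ZMod 2)) :
    Module.finrank (ZMod 2) (dualCode C) + Module.finrank (ZMod 2) C = n := by
  have hcomap : dualCode C = Submodule.comap (toDualLin n) C.dualAnnihilator := by
    ext u
    simp only [Submodule.mem_comap, Submodule.mem_dualAnnihilator]
    rfl
  let e := LinearEquiv.ofBijective (toDualLin n) (toDualLin_bij n)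
  have h1 : Module.finrank (ZMod 2) (dualCode C) =
      Module.finrank (ZMod 2) C.dualAnnihilator := by
    rw [hcomap]
    exact LinearEquiv.finrank_eq (LinearEquiv.ofSubmodule' e C.dualAnnihilator)
  have h2 : Module.finrank (ZMod 2) C.dualAnnihilator =
      Module.finrank (ZMod 2) ((Fin n → ZMod 2) ⧸ C) :=
    (LinearEquiv.finrank_eq (Subspace.quotEquivAnnihilator C)).symm
  have h3 := Submodule.finrank_quotient_add_finrank C
  rw [h1, h2, h3]
  simp [Module.finrank_pi]

lemma mySum_split (d t : ℕ) (ht : 1 ≤ t) :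
    ∑ i ∈ Finset.range t, d ⌈/⌉ 2 ^ i = d + ∑ i ∈ Finset.Icc 1 (t-1), d ⌈/⌉ 2 ^ i := by
  obtain ⟨s, rfl⟩ : ∃ s, t = s + 1 := ⟨t - 1, by omega⟩
  rw [Finset.sum_range_succ', pow_zero, ceilDiv_one, Nat.add_sub_cancel,
    ← Finset.Ico_add_one_right_eq_Icc, Finset.sum_Ico_eq_sum_range]
  simp [add_comm]

theorem primal_dual_griesmer_bound (n m d dp : ℕ) (C : Submodule (ZMod 2) (Fin n → ZMod 2))
    (hm : Module.finrank (ZMod 2) C = m) (h0 : 0 < m) (hmn : m < n)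
    (hd : 1 ≤ d) (hdp : 1 ≤ dp)
    (hC : MinDistGE C d) (hC' : MinDistGE (dualCode C) dp) :
    2 * n ≥ d + dp + (∑ i ∈ Finset.Icc 1 (m - 1), d ⌈/⌉ 2 ^ i) +
      ∑ i ∈ Finset.Icc 1 (n - m - 1), dp ⌈/⌉ 2 ^ i := by
  have h1 := griesmer m (Fin n) C d hd hm hC
  have hfd := finrank_dualCode C
  rw [hm] at hfd
  have hdualrank : Module.finrank (ZMod 2) (dualCode C) = n - m := by omega
  have h2 := griesmer (n - m) (Fin n) (dualCode C) dp hdp hdualrank hC'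
  rw [Fintype.card_fin] at h1 h2
  rw [mySum_split d m h0] at h1
  rw [mySum_split dp (n - m) (by omega)] at h2
  omega
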